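/- Let C be a category with cofibrations and T a triangulation of the (n+1)-gon containing a triangle with consecutive vertices {j-1, j, j+1}. Then the natural restriction map from lim_T iso(s_• C) (the limit of the sets of isomorphism classes over the triangles and shared diagonals of T) to the limit over T with the triangle {j-1,j,j+1} and the diagonal {j-1,j+1} removed, is surjective. -/

import Mathlib

/-!
STATEMENT 18: Let `C` be a category with cofibrations and `T` a triangulation of the
`(n+1)`-gon containing a triangle with consecutive vertices `{j-1, j, j+1}`.  Then the
natural restriction map from `lim_T iso(s_• C)` — the limit of the sets of isomorphism
classes over the triangles and shared diagonals of `T` — to the limit over `T` with the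
triangle `{j-1,j,j+1}` (and its diagonal `{j-1,j+1}`) removed, is surjective.

`iso(s₂C)` is the set of isomorphism classes of cofibration sequences (a cofibration with
a chosen cokernel); for each triangle, its three edges restrict such a class to the
isomorphism class of an object of `C` (`iso(s₁C)`).  The limit over `T` consists of the
families of classes, one for each triangle, agreeing on every shared edge.
Triangulations of convex polygons are defined recursively: a single triangle is a
triangulation, and two triangulations of sub-polygons lying on the two sides of a common
chord `{a,b}` glue to a triangulation.
-/

open CategoryTheory Limits

universe v u

/-- A category with cofibrations in the sense of Waldhausen. -/
structure CategoryWithCofibrations (C : Type u) [Category.{v} C] where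
  zero : C
  isZero : IsZero zero
  cof : MorphismProperty C
  cof_from_zero : ∀ {A : C} (f : zero ⟶ A), cof f
  cof_of_isIso : ∀ {A B : C} (f : A ⟶ B), IsIso f → cof f
  cof_comp : ∀ {A B D : C} (f : A ⟶ B) (g : B ⟶ D), cof f → cof g → cof (f ≫ g)
  cof_pushout : ∀ {A B X : C} (f : A ⟶ B) (g : A ⟶ X), cof f →
    ∃ (P : C) (inl : B ⟶ P) (inr : X ⟶ P), IsPushout f g inl inr ∧ cof inr

variable {C : Type u} [Category.{v} C]

/-- An object of `s₂C`: a cofibration together with a chosen cokernel. -/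
structure CofSeq (W : CategoryWithCofibrations C) where
  A : C
  B : C
  Q : C
  f : A ⟶ B
  hf : W.cof f
  q : B ⟶ Q
  hq : IsPushout f (W.isZero.from_ A) q (W.isZero.to_ Q)

/-- Isomorphism of cofibration sequences. -/
def CofSeqIso {W : CategoryWithCofibrations C} (x y : CofSeq W) : Prop :=
  ∃ (a : x.A ≅ y.A) (b : x.B ≅ y.B) (c : x.Q ≅ y.Q),
    x.f ≫ b.hom = a.hom ≫ y.f ∧ x.q ≫ c.hom = b.hom ≫ y.q

/-- `iso(s₂C)`: the set of isomorphism classes of `s₂C`. -/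
def IsoS2 (W : CategoryWithCofibrations C) : Type (max u v) :=
  Quot (CofSeqIso (W := W))

/-- `iso(s₁C)`: the set of isomorphism classes of objects of `C`. -/
def IsoS1 (C : Type u) [Category.{v} C] : Type u :=
  Quot (fun X Y : C => Nonempty (X ≅ Y))

/-- Restriction of a class in `iso(s₂C)` along the edge `{0,1}` of the triangle. -/
def edge01 {W : CategoryWithCofibrations C} : IsoS2 W → IsoS1 C :=
  Quot.map (fun s => s.A) (fun _ _ ⟨a, _, _, _, _⟩ => ⟨a⟩)

/-- Restriction of a class in `iso(s₂C)` along the edge `{0,2}` of the triangle. -/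
def edge02 {W : CategoryWithCofibrations C} : IsoS2 W → IsoS1 C :=
  Quot.map (fun s => s.B) (fun _ _ ⟨_, b, _, _, _⟩ => ⟨b⟩)

/-- Restriction of a class in `iso(s₂C)` along the edge `{1,2}` of the triangle. -/
def edge12 {W : CategoryWithCofibrations C} : IsoS2 W → IsoS1 C :=
  Quot.map (fun s => s.Q) (fun _ _ ⟨_, _, c, _, _⟩ => ⟨c⟩)

/-- A triangle of the `(n+1)`-gon, recorded with increasing vertices. -/
abbrev Triple (n : ℕ) := Fin (n + 1) × Fin (n + 1) × Fin (n + 1)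

/-- `v` is a vertex of the triangle `t`. -/
def vmem {n : ℕ} (v : Fin (n + 1)) (t : Triple n) : Prop :=
  v = t.1 ∨ v = t.2.1 ∨ v = t.2.2

/-- Restriction of a class of `s₂C`-diagrams indexed by the triangle `t` along the edge
of `t` with vertices `l < m`. -/
def edgeClass {W : CategoryWithCofibrations C} {n : ℕ} (t : Triple n)
    (l m : Fin (n + 1)) (x : IsoS2 W) : IsoS1 C :=
  if l = t.1 ∧ m = t.2.1 then edge01 x
  else if l = t.1 ∧ m = t.2.2 then edge02 x
  else edge12 x

/-- Triangulations of (sub)polygons of the `(n+1)`-gon, built recursively: a single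
triangle triangulates the polygon with its three vertices; triangulations of the two
polygons on either side of a chord `{a,b}` glue to a triangulation of their union. -/
inductive IsTriangulation (n : ℕ) : Finset (Fin (n + 1)) → Set (Triple n) → Prop
  | tri (a b c : Fin (n + 1)) (h1 : a < b) (h2 : b < c) :
      IsTriangulation n {a, b, c} {(a, b, c)}
  | glue (S₁ S₂ : Finset (Fin (n + 1))) (T₁ T₂ : Set (Triple n)) (a b : Fin (n + 1))
      (hab : a < b)
      (h₁ : IsTriangulation n S₁ T₁) (h₂ : IsTriangulation n S₂ T₂)
      (hS₁ : S₁ ⊆ Finset.Icc a b) (hS₂ : ∀ x ∈ S₂, x ≤ a ∨ b ≤ x)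
      (hint : S₁ ∩ S₂ = {a, b}) :
      IsTriangulation n (S₁ ∪ S₂) (T₁ ∪ T₂)

/-- Compatibility of a family of classes indexed by the triangles of `T`: whenever two
triangles share an edge `{l, m}`, the restrictions of the two classes to that edge
agree. -/
def Compat {W : CategoryWithCofibrations C} {n : ℕ} (T : Set (Triple n))
    (y : ∀ t ∈ T, IsoS2 W) : Prop :=
  ∀ t (ht : t ∈ T) t' (ht' : t' ∈ T) (l m : Fin (n + 1)), l < m → t ≠ t' →
    vmem l t → vmem m t → vmem l t' → vmem m t' →
      edgeClass t l m (y t ht) = edgeClass t' l m (y t' ht')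

/-- `lim_T iso(s_•C)`: compatible families of isomorphism classes over the triangles of
`T`. -/
def Lim (W : CategoryWithCofibrations C) {n : ℕ} (T : Set (Triple n)) :=
  {y : ∀ t ∈ T, IsoS2 W // Compat T y}

/-- The restriction map between the limits along an inclusion of sets of triangles. -/
def restrictLim (W : CategoryWithCofibrations C) {n : ℕ} {T T' : Set (Triple n)}
    (h : T' ⊆ T) (y : Lim W T) : Lim W T' :=
  ⟨fun t ht => y.1 t (h ht),
   fun t ht t' ht' l m hlm hne a1 a2 a3 a4 =>
     y.2 t (h ht) t' (h ht') l m hlm hne a1 a2 a3 a4⟩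


section Aux

/-- Each triangle of a triangulation has increasing vertices lying in the vertex set. -/
theorem IsTriangulation.vertices {n : ℕ} {S : Finset (Fin (n + 1))} {T : Set (Triple n)}
    (h : IsTriangulation n S T) :
    ∀ t ∈ T, t.1 ∈ S ∧ t.2.1 ∈ S ∧ t.2.2 ∈ S ∧ t.1 < t.2.1 ∧ t.2.1 < t.2.2 := by
  induction h with
  | tri a b c h1 h2 =>
    rintro t ht
    rw [Set.mem_singleton_iff] at ht
    subst ht
    exact ⟨by simp, by simp, by simp, h1, h2⟩
  | glue S₁ S₂ T₁ T₂ p q hpq h₁ h₂ hS₁ hS₂ hint ih₁ ih₂ =>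
    rintro t (ht | ht)
    · obtain ⟨m1, m2, m3, l1, l2⟩ := ih₁ t ht
      exact ⟨Finset.mem_union_left _ m1, Finset.mem_union_left _ m2,
        Finset.mem_union_left _ m3, l1, l2⟩
    · obtain ⟨m1, m2, m3, l1, l2⟩ := ih₂ t ht
      exact ⟨Finset.mem_union_right _ m1, Finset.mem_union_right _ m2,
        Finset.mem_union_right _ m3, l1, l2⟩

theorem vmem_mem {n : ℕ} {S : Finset (Fin (n + 1))} {T : Set (Triple n)}
    (h : IsTriangulation n S T) {t : Triple n} (ht : t ∈ T) {v : Fin (n + 1)}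
    (hv : vmem v t) : v ∈ S := by
  obtain ⟨m1, m2, m3, _, _⟩ := h.vertices t ht
  rcases hv with rfl | rfl | rfl <;> assumption

/-- Ear uniqueness. -/
theorem ear_unique {n : ℕ} {S : Finset (Fin (n + 1))} {T : Set (Triple n)}
    (h : IsTriangulation n S T) (a b c : Fin (n + 1)) (habc : (a, b, c) ∈ T)
    (hS : ∀ s ∈ S, s ≤ a ∨ s = b ∨ c ≤ s) :
    ∀ t' ∈ T, vmem b t' → t' = (a, b, c) := by
  induction h with
  | tri x y z h1 h2 =>
    intro t' ht' _
    rw [Set.mem_singleton_iff] at habc ht'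
    rw [ht', habc]
  | glue S₁ S₂ T₁ T₂ p q hpq h₁ h₂ hS₁ hS₂ hint ih₁ ih₂ =>
    have habS : ∀ s ∈ S₁, s ≤ a ∨ s = b ∨ c ≤ s := fun s hs =>
      hS s (Finset.mem_union_left _ hs)
    have habS₂ : ∀ s ∈ S₂, s ≤ a ∨ s = b ∨ c ≤ s := fun s hs =>
      hS s (Finset.mem_union_right _ hs)
    have hmempq : ∀ v : Fin (n+1), v ∈ S₁ → v ∈ S₂ → v = p ∨ v = q := by
      intro v hv1 hv2
      have : v ∈ S₁ ∩ S₂ := Finset.mem_inter.2 ⟨hv1, hv2⟩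
      rw [hint] at this
      simpa using this
    rcases habc with habc | habc
    · obtain ⟨ha, hb, hc, hab, hbc⟩ := h₁.vertices _ habc
      rintro t' (ht' | ht') hvb
      · exact ih₁ habc habS t' ht' hvb
      · exfalso
        have hbS₂ : b ∈ S₂ := vmem_mem h₂ ht' hvb
        have haI := Finset.mem_Icc.1 (hS₁ ha)
        have hcI := Finset.mem_Icc.1 (hS₁ hc)
        rcases hmempq b hb hbS₂ with rfl | rfl
        · exact absurd (lt_of_le_of_lt haI.1 hab) (lt_irrefl _)
        · exact absurd (lt_of_lt_of_le hbc hcI.2) (lt_irrefl _)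
    · obtain ⟨ha, hb, hc, hab, hbc⟩ := h₂.vertices _ habc
      rintro t' (ht' | ht') hvb
      · exfalso
        have hbS₁ : b ∈ S₁ := vmem_mem h₁ ht' hvb
        obtain ⟨m1, m2, m3, l1, l2⟩ := h₁.vertices t' ht'
        have h1I := Finset.mem_Icc.1 (hS₁ m1)
        have h3I := Finset.mem_Icc.1 (hS₁ m3)
        have hsps : p < t'.2.1 := lt_of_le_of_lt h1I.1 l1
        have hssq : t'.2.1 < q := lt_of_lt_of_le l2 h3I.2
        have hsab := habS t'.2.1 m2
        have hap := hS₂ a ha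
        have hcp := hS₂ c hc
        rcases hmempq b hbS₁ hb with rfl | rfl <;>
          rcases hap with h' | h' <;> rcases hcp with h'' | h'' <;>
          rcases hsab with h3 | h3 | h3 <;>
          simp only [Fin.lt_def, Fin.le_def, Fin.ext_iff] at * <;> omega
      · exact ih₂ habc habS₂ t' ht' hvb

end Aux

set_option maxHeartbeats 1000000 in
/-- If the triangulation `T` of the `(n+1)`-gon contains the triangle with consecutive
vertices `{j-1, j, j+1}`, then the restriction map from `lim_T iso(s_•C)` to the limit
over `T` with this triangle (and its diagonal `{j-1, j+1}`) removed is surjective. -/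
theorem restrictLim_surjective (W : CategoryWithCofibrations C) (n : ℕ)
    (T : Set (Triple n)) (hT : IsTriangulation n Finset.univ T)
    (j : ℕ) (hj1 : 1 ≤ j) (hj2 : j + 1 ≤ n)
    (t₀ : Triple n)
    (ht₀ : t₀ = (⟨j - 1, by omega⟩, ⟨j, by omega⟩, ⟨j + 1, by omega⟩))
    (ht₀T : t₀ ∈ T) :
    Function.Surjective (restrictLim W (Set.diff_subset : T \ {t₀} ⊆ T)) := by
  classical
  intro y'
  set a : Fin (n + 1) := ⟨j - 1, by omega⟩ with ha_def
  set b : Fin (n + 1) := ⟨j, by omega⟩ with hb_def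
  set c : Fin (n + 1) := ⟨j + 1, by omega⟩ with hc_def
  have ht₀' : t₀ = (a, b, c) := ht₀
  subst ht₀'
  have hac : a < c := by simp only [ha_def, hc_def, Fin.lt_def]; omega
  -- ear: no other triangle of T contains b
  have hear : ∀ t' ∈ T, vmem b t' → t' = (a, b, c) := by
    refine ear_unique hT a b c ht₀T ?_
    intro s _
    rcases Nat.lt_trichotomy s.val j with h | h | h
    · exact Or.inl (by simp only [ha_def, Fin.le_def]; omega)
    · exact Or.inr (Or.inl (by simp only [hb_def, Fin.ext_iff]; omega))
    · exact Or.inr (Or.inr (by simp only [hc_def, Fin.le_def]; omega))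
  -- the class required along the diagonal {a, c}
  set c₀ : IsoS1 C :=
    if hex : ∃ t', ∃ _ : t' ∈ T \ {(a, b, c)}, vmem a t' ∧ vmem c t' then
      edgeClass hex.choose a c (y'.1 hex.choose hex.choose_spec.choose)
    else Quot.mk _ W.zero with hc₀_def
  have hc₀ : ∀ t' (h : t' ∈ T \ {(a, b, c)}), vmem a t' → vmem c t' →
      edgeClass t' a c (y'.1 t' h) = c₀ := by
    intro t' h hva hvc
    have hex : ∃ t', ∃ _ : t' ∈ T \ {(a, b, c)}, vmem a t' ∧ vmem c t' :=
      ⟨t', h, hva, hvc⟩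
    rw [hc₀_def]
    refine Eq.trans ?_ (dif_pos hex).symm
    set t'' := hex.choose with ht''
    have h'' : t'' ∈ T \ {(a, b, c)} := hex.choose_spec.choose
    have hv'' : vmem a t'' ∧ vmem c t'' := hex.choose_spec.choose_spec
    by_cases heq : t' = t''
    · subst heq; rfl
    · exact y'.2 t' h t'' h'' a c hac heq hva hvc hv''.1 hv''.2
  -- choose a representative object
  obtain ⟨V, hV⟩ := Quot.exists_rep c₀
  -- the trivial cofibration sequence 0 ↣ V with identity cokernel
  have gid : W.isZero.from_ W.zero = 𝟙 W.zero := W.isZero.eq_of_src _ _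
  have hiso : IsIso (W.isZero.from_ W.zero) := by rw [gid]; infer_instance
  have hpo : IsPushout (W.isZero.to_ V) (W.isZero.from_ W.zero) (𝟙 V)
      (W.isZero.to_ V) :=
    @IsPushout.of_vert_isIso _ _ _ _ _ _ _ _ _ _ hiso _ ⟨W.isZero.eq_of_src _ _⟩
  let triv : CofSeq W :=
    { A := W.zero, B := V, Q := V, f := W.isZero.to_ V,
      hf := W.cof_from_zero _, q := 𝟙 V, hq := hpo }
  -- the new family of classes
  set yfun : ∀ t ∈ T, IsoS2 W :=
    fun t ht => if h : t = (a, b, c) then Quot.mk _ triv else y'.1 t ⟨ht, h⟩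
    with hyfun
  have hyfun_pos : ∀ ht : (a, b, c) ∈ T, yfun (a, b, c) ht = Quot.mk _ triv := by
    intro ht; rw [hyfun]; exact dif_pos rfl
  have hyfun_neg : ∀ t (ht : t ∈ T) (h : ¬ t = (a, b, c)),
      yfun t ht = y'.1 t ⟨ht, h⟩ := by
    intro t ht h; rw [hyfun]; exact dif_neg h
  have hcb : ¬ (a = a ∧ c = b) := by
    rintro ⟨-, h⟩
    rw [hc_def, hb_def, Fin.mk.injEq] at h
    omega
  have hedge : edgeClass (a, b, c) a c (Quot.mk _ triv) = c₀ := by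
    unfold edgeClass
    rw [if_neg hcb, if_pos ⟨rfl, rfl⟩]
    show Quot.mk _ triv.B = c₀
    exact hV
  have key : ∀ t' (ht' : t' ∈ T) (hte' : ¬ t' = (a, b, c)) (l m : Fin (n + 1)),
      l < m → vmem l (a, b, c) → vmem m (a, b, c) → vmem l t' → vmem m t' →
      edgeClass (a, b, c) l m (Quot.mk _ triv) = edgeClass t' l m (y'.1 t' ⟨ht', hte'⟩) := by
    intro t' ht' hte' l m hlm h1 h2 h3 h4
    have hlb : l ≠ b := fun h => hte' (hear t' ht' (h ▸ h3))
    have hmb : m ≠ b := fun h => hte' (hear t' ht' (h ▸ h4))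
    have h1' : l = a ∨ l = b ∨ l = c := h1
    have h2' : m = a ∨ m = b ∨ m = c := h2
    have hvac : l = a ∧ m = c := by
      rcases h1' with rfl | rfl | rfl <;> rcases h2' with rfl | rfl | rfl <;>
        first
          | exact ⟨rfl, rfl⟩
          | exact absurd rfl hlb
          | exact absurd rfl hmb
          | exact absurd hlm (lt_irrefl _)
          | exact absurd (hac.trans hlm) (lt_irrefl _)
    obtain ⟨rfl, rfl⟩ := hvac
    rw [hedge, hc₀ t' ⟨ht', hte'⟩ h3 h4]
  refine ⟨⟨yfun, ?_⟩, ?_⟩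
  · intro t ht t' ht' l m hlm hne h1 h2 h3 h4
    by_cases hte : t = (a, b, c) <;> by_cases hte' : t' = (a, b, c)
    · exact absurd (hte.trans hte'.symm) hne
    · subst hte
      rw [hyfun_pos ht, hyfun_neg t' ht' hte']
      exact key t' ht' hte' l m hlm h1 h2 h3 h4
    · subst hte'
      rw [hyfun_pos ht', hyfun_neg t ht hte]
      exact (key t ht hte l m hlm h3 h4 h1 h2).symm
    · rw [hyfun_neg t ht hte, hyfun_neg t' ht' hte']
      exact y'.2 t ⟨ht, hte⟩ t' ⟨ht', hte'⟩ l m hlm hne h1 h2 h3 h4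
  · apply Subtype.ext
    funext t ht
    show yfun t (Set.diff_subset ht) = y'.1 t ht
    rw [hyfun_neg t (Set.diff_subset ht) ht.2]
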